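/- For any nonzero partition μ = (r^{n_r}, ..., 2^{n_2}, 1^{n_1}) with n_r > 0, the Dyck vector w = 0 B_μ where B_μ = 0 1^{n_1} 0 1^{n_2} ⋯ 0 1^{n_r} satisfies: len(w) = μ_1 + ℓ(μ) + 1, defc(w) = |μ|, area(w) = ℓ(μ), and dinv(w) = C(μ_1 + ℓ(μ) + 1, 2) - ℓ(μ) - |μ|. -/

import Mathlib

/-- dinv contribution of an entry coming from extended negative positions. -/
def negContrib (x : ℤ) : ℕ := (if x ≤ -1 then 1 else 0) + (if x ≤ -2 then 1 else 0)

/-- The diagonal inversion statistic of a quasi-Dyck vector, with the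
convention `v_k = k - 1` for `k ≤ 0`. -/
def dinv (v : List ℤ) : ℕ :=
  (Finset.univ.filter (fun p : Fin v.length × Fin v.length =>
      (p.1 : ℕ) < (p.2 : ℕ) ∧ (v.get p.1 - v.get p.2 = 0 ∨ v.get p.1 - v.get p.2 = 1))).card
  + (v.map negContrib).sum

def area (v : List ℤ) : ℤ := v.sum

def defc (v : List ℤ) : ℤ := (v.length.choose 2 : ℤ) - area v - (dinv v : ℤ)

/-- Quasi-Dyck vector: nonempty, starts with 0, consecutive increases ≤ 1. -/
def IsQDV (v : List ℤ) : Prop :=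
  v.head? = some 0 ∧ ∀ i : ℕ, i + 1 < v.length → v.getD (i + 1) 0 ≤ v.getD i 0 + 1

def IsDyck (v : List ℤ) : Prop := IsQDV v ∧ ∀ x ∈ v, 0 ≤ x

def stepRel (v w : List ℤ) : Prop := w = 0 :: v.map (· + 1)

def dyckEquiv : List ℤ → List ℤ → Prop := Relation.EqvGen stepRel

def dyckSetoid : Setoid (List ℤ) := Relation.EqvGen.setoid stepRel

abbrev DyckClass := Quotient dyckSetoid

def cls (v : List ℤ) : DyckClass := Quotient.mk dyckSetoid v

/-- Reduced Dyck vector: a Dyck vector that is not `0 z⁺` for a Dyck vector `z`. -/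
def IsReducedDV (v : List ℤ) : Prop :=
  IsDyck v ∧ ¬ ∃ z : List ℤ, IsDyck z ∧ v = 0 :: z.map (· + 1)

/-- The leader of a QDV: the largest `d` such that `v` starts with `0,1,...,d`. -/
def leader (v : List ℤ) : ℕ :=
  Nat.findGreatest (fun d => ∀ i, i ≤ d → v.getD i 0 = (i : ℤ)) (v.length - 1)

/-- Delete the leader symbol and append `leader - 1`. -/
def nuStep (v : List ℤ) : List ℤ :=
  v.take (leader v) ++ v.drop (leader v + 1) ++ [(leader v : ℤ) - 1]

def nuApplies (v : List ℤ) : Prop :=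
  IsQDV v ∧ 2 ≤ v.length ∧ 0 ≤ v.getD 1 0 ∧ (leader v : ℤ) ≤ v.getLastD 0 + 2

/-- The map NU₁ on Dyck classes, as a relation. -/
def nuClassRel (c c' : DyckClass) : Prop :=
  ∃ v, nuApplies v ∧ c = cls v ∧ c' = cls (nuStep v)

def stepOk (A : List ℤ) : Prop := ∀ i : ℕ, i + 1 < A.length → A.getD (i + 1) 0 ≤ A.getD i 0 + 1

def okA (A : List ℤ) : Prop :=
  A = [] ∨ ((∀ x ∈ A, x ≤ 2) ∧ 0 ≤ A.getLastD 0 ∧ stepOk A)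

def okB (B : List ℤ) : Prop :=
  B = [] ∨ ((∀ x ∈ B, x ≤ 2) ∧ B.headD 0 ≤ 1 ∧ -1 ≤ B.getLastD 0 ∧ stepOk B)

/-- The map NU₂ on Dyck classes, as a relation. -/
def nu2ClassRel (c c' : DyckClass) : Prop :=
  (∃ (h : ℕ) (A : List ℤ), 2 ≤ h ∧ okA A ∧
      c = cls ([0, 1] ++ List.replicate h (2:ℤ) ++ A ++ List.replicate (h - 1) (-1)) ∧
      c' = cls (List.replicate h (0:ℤ) ++ [1] ++ A ++ List.replicate h 1)) ∨
  (∃ (k : ℕ) (B : List ℤ), 1 ≤ k ∧ okB B ∧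
      c = cls ([0, 1] ++ List.replicate k (2:ℤ) ++ B ++ List.replicate k (-1)) ∧
      c' = cls (List.replicate (k + 1) (0:ℤ) ++ B ++ [0] ++ List.replicate k 1))

/-- The extended next-up map NU = NU₁ ∪ NU₂, as a relation on Dyck classes. -/
def nuRel (c c' : DyckClass) : Prop := nuClassRel c c' ∨ nu2ClassRel c c'

/-- An integer partition, given by its weakly decreasing list of positive parts. -/
def IsPartitionList (l : List ℕ) : Prop := l.Pairwise (· ≥ ·) ∧ ∀ x ∈ l, 0 < x

/-- `phi l n` = the QDV `(0 - λ_n, 1 - λ_{n-1}, ..., (n-1) - λ_1)`. -/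
def phi (l : List ℕ) (n : ℕ) : List ℤ :=
  List.ofFn (fun i : Fin n => (i : ℤ) - (l.getD (n - 1 - (i : ℕ)) 0 : ℤ))

def nuOne (g : List ℕ) : List ℕ :=
  (g.length + 1) :: (g.map (· - 1)).filter (fun x => 0 < x)

def ndOne (g : List ℕ) : List ℕ :=
  g.tail.map (· + 1) ++ List.replicate (g.headD 0 - g.length) 1

/-- dinv of a partition: number of cells with arm - leg ∈ {0,1}. -/
def pdinv (l : List ℕ) : ℕ :=
  (Finset.univ.filter (fun c : Fin l.length × Fin (l.headD 0) =>
    (c.2 : ℕ) < l.get c.1 ∧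
      (l.get c.1 - 1 - (c.2 : ℕ) =
          (Finset.univ.filter (fun i' : Fin l.length =>
            (c.1 : ℕ) < (i' : ℕ) ∧ (c.2 : ℕ) < l.get i')).card ∨
        l.get c.1 - 1 - (c.2 : ℕ) =
          (Finset.univ.filter (fun i' : Fin l.length =>
            (c.1 : ℕ) < (i' : ℕ) ∧ (c.2 : ℕ) < l.get i')).card + 1))).card

/-- `bWord [n_1, ..., n_r]` = `0 1^{n_1} 0 1^{n_2} ⋯ 0 1^{n_r}`. -/
def bWord (ns : List ℕ) : List ℤ :=
  (ns.map (fun m => (0:ℤ) :: List.replicate m 1)).flatten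

/-- `msize [n_1, ..., n_r] = Σ i·n_i`, the size of the partition `(r^{n_r},...,1^{n_1})`. -/
def msize (ns : List ℕ) : ℕ :=
  (List.zipWith (fun m i => m * i) ns (List.range' 1 ns.length)).sum

/-- The reduced Dyck vector `0 B_μ` of the tail initiator of a partition. -/
def tiVec (l : List ℕ) : List ℤ :=
  (0:ℤ) :: ((List.range' 1 (l.headD 0)).map
    (fun i => (0:ℤ) :: List.replicate (l.count i) (1:ℤ))).flatten

/-- `c` is the second-order tail initiator of the partition `l`: obtained from
`[0 B_μ]` by iterating the extended next-down map as long as possible. -/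
def IsTI2 (l : List ℕ) (c : DyckClass) : Prop :=
  Relation.ReflTransGen (fun x y => nuRel y x) (cls (tiVec l)) c ∧ ∀ d, ¬ nuRel d c

/-- `m` is the minimum triangle height of the Dyck class `c`. -/
def mindIs (c : DyckClass) (m : ℕ) : Prop :=
  ∃ v, IsReducedDV v ∧ c = cls v ∧ v.length = m

/-- Flagpole partition: `|μ| + 8 ≤ 2 mind(TI₂(μ))`. -/
def IsFlagpole (l : List ℕ) : Prop :=
  ∃ c m, IsTI2 l c ∧ mindIs c m ∧ l.sum + 8 ≤ 2 * m

/-- The Dyck vector `v(λ,a,ε) = 0 0 1 2^{a-ε} B_λ⁺ 1^ε`. -/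
def vLam (ns : List ℕ) (a ε : ℕ) : List ℤ :=
  [0, 0, 1] ++ List.replicate (a - ε) (2:ℤ) ++ (bWord ns).map (· + 1) ++ List.replicate ε 1


def cnt1 (v : List ℤ) : ℕ :=
  (Finset.univ.filter (fun i : Fin v.length => v.get i = 1)).card

def cnt01 (v : List ℤ) : ℕ :=
  (Finset.univ.filter (fun p : Fin v.length × Fin v.length =>
    (p.1 : ℕ) < (p.2 : ℕ) ∧ v.get p.1 = 0 ∧ v.get p.2 = 1)).card

lemma cnt1_cons (x : ℤ) (v : List ℤ) :
    cnt1 (x :: v) = (if x = 1 then 1 else 0) + cnt1 v := by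
  simp only [cnt1, Finset.card_filter, List.length_cons]
  rw [Fin.sum_univ_succ]
  simp [List.get_cons_succ]
  by_cases hx : x = 1 <;> simp [hx]

lemma cnt01_cons (x : ℤ) (v : List ℤ) :
    cnt01 (x :: v) = (if x = 0 then cnt1 v else 0) + cnt01 v := by
  simp only [cnt01, cnt1, Finset.card_filter, List.length_cons]
  rw [Fintype.sum_prod_type, Fin.sum_univ_succ]
  congr 1
  · rw [Fin.sum_univ_succ]
    simp only [Fin.val_zero, Fin.val_succ, List.get_cons_zero, List.get_cons_succ]
    simp only [Nat.lt_irrefl, false_and, if_false, Nat.zero_lt_succ, true_and, zero_add]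
    by_cases hx : x = 0 <;> simp [hx]
  · rw [Fintype.sum_prod_type]
    apply Finset.sum_congr rfl
    intro i _
    rw [Fin.sum_univ_succ]
    simp [List.get_cons_succ, Nat.succ_lt_succ_iff]

lemma cardS (n : ℕ) :
    (Finset.univ.filter fun p : Fin n × Fin n => (p.1 : ℕ) < (p.2 : ℕ)).card = n.choose 2 := by
  rw [Finset.card_filter, Fintype.sum_prod_type_right]
  have h1 : ∀ j : Fin n, (∑ i : Fin n, if (i : ℕ) < (j : ℕ) then 1 else 0) = (j : ℕ) := by
    intro j
    rw [← Finset.card_filter]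
    have : (Finset.univ.filter fun i : Fin n => (i : ℕ) < (j : ℕ)) = Finset.Iio j := by
      ext i
      simp only [Finset.mem_filter, Finset.mem_univ, true_and, Finset.mem_Iio, Fin.lt_def]
    rw [this, Fin.card_Iio]
  simp only [h1]
  rw [show (∑ x : Fin n, (x:ℕ)) = ∑ i ∈ Finset.range n, i from Fin.sum_univ_eq_sum_range (fun i => i) n,
    Finset.sum_range_id, Nat.choose_two_right]

def dinvX (v : List ℤ) : ℕ :=
  (Finset.univ.filter (fun p : Fin v.length × Fin v.length =>
      (p.1 : ℕ) < (p.2 : ℕ) ∧ (v.get p.1 - v.get p.2 = 0 ∨ v.get p.1 - v.get p.2 = 1))).card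
  + (v.map (fun x : ℤ => (if x ≤ -1 then 1 else 0) + (if x ≤ -2 then 1 else 0))).sum

lemma dinvX_eq (v : List ℤ) (h01 : ∀ x ∈ v, x = 0 ∨ x = 1) :
    dinvX v + cnt01 v = v.length.choose 2 := by
  have hneg : (v.map (fun x : ℤ => (if x ≤ -1 then 1 else 0) + (if x ≤ -2 then 1 else 0))).sum = 0 := by
    apply List.sum_eq_zero
    intro y hy
    obtain ⟨x, hx, rfl⟩ := List.mem_map.mp hy
    rcases h01 x hx with rfl | rfl <;> norm_num
  rw [dinvX, hneg, Nat.add_zero]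
  have e1 : (Finset.univ.filter (fun p : Fin v.length × Fin v.length =>
      (p.1 : ℕ) < (p.2 : ℕ) ∧ (v.get p.1 - v.get p.2 = 0 ∨ v.get p.1 - v.get p.2 = 1)))
      = (Finset.univ.filter (fun p : Fin v.length × Fin v.length => (p.1 : ℕ) < (p.2 : ℕ))).filter
        (fun p => (v.get p.1 - v.get p.2 = 0 ∨ v.get p.1 - v.get p.2 = 1)) := by
    rw [Finset.filter_filter]
  have e2 : (Finset.univ.filter (fun p : Fin v.length × Fin v.length =>
      (p.1 : ℕ) < (p.2 : ℕ) ∧ v.get p.1 = 0 ∧ v.get p.2 = 1))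
      = (Finset.univ.filter (fun p : Fin v.length × Fin v.length => (p.1 : ℕ) < (p.2 : ℕ))).filter
        (fun p => ¬ (v.get p.1 - v.get p.2 = 0 ∨ v.get p.1 - v.get p.2 = 1)) := by
    rw [Finset.filter_filter]
    apply Finset.filter_congr
    intro p _
    have h1 : v.get p.1 = 0 ∨ v.get p.1 = 1 := h01 _ (v.get_mem p.1)
    have h2 : v.get p.2 = 0 ∨ v.get p.2 = 1 := h01 _ (v.get_mem p.2)
    constructor
    · rintro ⟨hlt, ha, hb⟩; exact ⟨hlt, by omega⟩
    · rintro ⟨hlt, hnd⟩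
      refine ⟨hlt, ?_, ?_⟩ <;> rcases h1 with ha | ha <;> rcases h2 with hb | hb <;> omega
  rw [e1, cnt01, e2, Finset.card_filter_add_card_filter_not, cardS]

lemma bWord_cons (m : ℕ) (ns : List ℕ) :
    bWord (m :: ns) = 0 :: (List.replicate m (1:ℤ) ++ bWord ns) := by
  simp [bWord]

lemma cnt1_nil : cnt1 [] = 0 := by simp [cnt1]

lemma cnt01_nil : cnt01 [] = 0 := by simp [cnt01]

lemma cnt1_rep (m : ℕ) (w : List ℤ) : cnt1 (List.replicate m 1 ++ w) = m + cnt1 w := by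
  induction m with
  | zero => simp
  | succ k ih => rw [List.replicate_succ, List.cons_append, cnt1_cons, ih]; simp; omega

lemma cnt01_rep (m : ℕ) (w : List ℤ) : cnt01 (List.replicate m 1 ++ w) = cnt01 w := by
  induction m with
  | zero => simp
  | succ k ih => rw [List.replicate_succ, List.cons_append, cnt01_cons, ih]; simp

lemma bWord_len (ns : List ℕ) : (bWord ns).length = ns.length + ns.sum := by
  induction ns with
  | nil => simp [bWord]
  | cons m ns ih => rw [bWord_cons]; simp [ih]; omega

lemma bWord_sum (ns : List ℕ) : (bWord ns).sum = (ns.sum : ℤ) := by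
  induction ns with
  | nil => simp [bWord]
  | cons m ns ih => rw [bWord_cons]; simp [ih]

lemma bWord_mem (ns : List ℕ) : ∀ x ∈ bWord ns, x = 0 ∨ x = 1 := by
  induction ns with
  | nil => simp [bWord]
  | cons m ns ih =>
    rw [bWord_cons]
    intro x hx
    rcases List.mem_cons.mp hx with rfl | hx
    · left; rfl
    · rcases List.mem_append.mp hx with h | h
      · right; exact (List.eq_of_mem_replicate h)
      · exact ih x h

lemma cnt1_bWord (ns : List ℕ) : cnt1 (bWord ns) = ns.sum := by
  induction ns with
  | nil => simpa [bWord] using cnt1_nil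
  | cons m ns ih => rw [bWord_cons, cnt1_cons, cnt1_rep, ih]; simp

lemma zip_shift (ns : List ℕ) (k : ℕ) :
    (List.zipWith (fun m i => m * i) ns (List.range' (k+1) ns.length)).sum
      = (List.zipWith (fun m i => m * i) ns (List.range' k ns.length)).sum + ns.sum := by
  induction ns generalizing k with
  | nil => simp
  | cons m ns ih =>
    simp only [List.length_cons, List.range'_succ, List.zipWith_cons_cons, List.sum_cons,
      List.sum_cons, ih (k+1), Nat.mul_succ, ih k]
    omega

lemma msize_cons (m : ℕ) (ns : List ℕ) : msize (m :: ns) = m + msize ns + ns.sum := by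
  simp only [msize, List.length_cons, List.range'_succ, List.zipWith_cons_cons, List.sum_cons]
  rw [zip_shift]
  omega

lemma cnt01_bWord (ns : List ℕ) : cnt01 (bWord ns) = msize ns := by
  induction ns with
  | nil => simp [bWord, cnt01_nil, msize]
  | cons m ns ih =>
    rw [bWord_cons, cnt01_cons, cnt01_rep, ih, cnt1_rep, cnt1_bWord, msize_cons]
    simp; omega

theorem stmt11 (ns : List ℕ) (hne : ns ≠ []) (hlast : 0 < ns.getLastD 0) :
    ((0:ℤ) :: bWord ns).length = ns.length + ns.sum + 1 ∧
    defc ((0:ℤ) :: bWord ns) = (msize ns : ℤ) ∧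
    area ((0:ℤ) :: bWord ns) = (ns.sum : ℤ) ∧
    (dinv ((0:ℤ) :: bWord ns) : ℤ)
      = ((ns.length + ns.sum + 1).choose 2 : ℤ) - (ns.sum : ℤ) - (msize ns : ℤ) := by
  set w : List ℤ := (0:ℤ) :: bWord ns with hw
  have hlen : w.length = ns.length + ns.sum + 1 := by
    simp [hw, bWord_len]
  have h01 : ∀ x ∈ w, x = 0 ∨ x = 1 := by
    intro x hx
    rw [hw] at hx
    rcases List.mem_cons.mp hx with rfl | hx
    · left; rfl
    · exact bWord_mem ns x hx
  have hdinv : dinv w = dinvX w := rfl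
  have hkey : dinvX w + cnt01 w = w.length.choose 2 := dinvX_eq w h01
  have hc : cnt01 w = ns.sum + msize ns := by
    rw [hw, cnt01_cons, cnt1_bWord, cnt01_bWord]
    simp
  have harea : area w = (ns.sum : ℤ) := by
    simp [area, hw, bWord_sum]
  rw [hlen, hc] at hkey
  rw [hdinv]
  refine ⟨hlen, ?_, harea, ?_⟩
  · simp only [defc, hlen, harea, hdinv]
    omega
  · omega
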